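/- arXiv:0812.4988 — 2 statements merged into one kernel-verified Lean document; each statement's English description precedes it below -/
import Mathlib

section
/- Let K be a pointed topological space with basepoint *. The assignment sending (x, y, t) ∈ K × K × [0,1] to the point of Σ(K ∨ K) represented by (4t, in₁ x) for t ∈ [0, 1/4], by (4t − 1, in₂ y) for t ∈ [1/4, 1/2], by (3 − 4t, in₁ x) for t ∈ [1/2, 3/4], and by (4 − 4t, in₂ y) for t ∈ [3/4, 1], descends to a well-defined continuous map W̃mod : K ∗ K → Σ(K ∨ K). Moreover W̃mod is ℤ/2-equivariant: if K ∗ K carries the involution [x, y, t] ↦ [y, x, 1 − t] and Σ(K ∨ K) carries the involution induced by the identity on the suspension coordinate and the swap of the two wedge summands (in₁ x ↔ in₂ x), then W̃mod intertwines the two involutions. -/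
open unitInterval

universe u

/-! ### The join, the wedge and the reduced suspension, as quotient spaces -/

/-- The relation on `K × K × [0,1]` generating the join `K ∗ K`:
`(x, y, 0) ∼ (x', y, 0)` and `(x, y, 1) ∼ (x, y', 1)`. -/
def joinRel (K : Type u) : K × K × I → K × K × I → Prop := fun p q =>
  (p.2.2 = 0 ∧ q.2.2 = 0 ∧ p.2.1 = q.2.1) ∨ (p.2.2 = 1 ∧ q.2.2 = 1 ∧ p.1 = q.1)

/-- The join `K ∗ K`, with the quotient topology. -/
abbrev Join (K : Type u) [TopologicalSpace K] := Quot (joinRel K)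

/-- The class of `(x, y, t)` in the join. -/
def joinMk {K : Type u} [TopologicalSpace K] (x y : K) (t : I) : Join K :=
  Quot.mk _ (x, y, t)

/-- The involution `[x, y, t] ↦ [y, x, 1 - t]` of the join. -/
def joinInv {K : Type u} [TopologicalSpace K] : Join K → Join K :=
  Quot.lift (fun p => joinMk p.2.1 p.1 (σ p.2.2)) <| by
    rintro ⟨x, y, t⟩ ⟨x', y', t'⟩ (⟨h1, h2, h3⟩ | ⟨h1, h2, h3⟩) <;> dsimp only at h1 h2 h3 ⊢
    · subst h1; subst h2; subst h3
      exact Quot.sound (Or.inr ⟨by simp, by simp, rfl⟩)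
    · subst h1; subst h2; subst h3
      exact Quot.sound (Or.inl ⟨by simp, by simp, rfl⟩)

/-- The relation on `[0,1] × L` generating the reduced suspension `ΣL`: the subset
`({0} × L) ∪ ({1} × L) ∪ ([0,1] × {l₀})` is collapsed to a point. -/
def suspRel {L : Type u} (l₀ : L) : I × L → I × L → Prop := fun p q =>
  (p.1 = 0 ∨ p.1 = 1 ∨ p.2 = l₀) ∧ (q.1 = 0 ∨ q.1 = 1 ∨ q.2 = l₀)

/-- The reduced suspension `ΣL` of the pointed space `(L, l₀)`. -/
abbrev Susp (L : Type u) [TopologicalSpace L] (l₀ : L) := Quot (suspRel l₀)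

/-- The class of `(t, z)` in the reduced suspension. -/
def suspMk {L : Type u} [TopologicalSpace L] (l₀ : L) (t : I) (z : L) : Susp L l₀ :=
  Quot.mk _ (t, z)

/-- The point of `ΣL` represented by a real suspension coordinate `t` (clamped to `[0,1]`)
and a point `z` of `L`. -/
noncomputable def suspPtR {L : Type u} [TopologicalSpace L] (l₀ : L) (t : ℝ) (z : L) :
    Susp L l₀ :=
  suspMk l₀ (Set.projIcc (0 : ℝ) 1 zero_le_one t) z

/-- The map `ΣL → ΣL'` induced by a basepoint preserving map `L → L'`,
acting as the identity on the suspension coordinate. -/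
def suspMap {L L' : Type u} [TopologicalSpace L] [TopologicalSpace L']
    (l₀ : L) (l₀' : L') (f : L → L') (hf : f l₀ = l₀') : Susp L l₀ → Susp L' l₀' :=
  Quot.lift (fun p => suspMk l₀' p.1 (f p.2)) <| by
    rintro ⟨t, z⟩ ⟨t', z'⟩ ⟨h, h'⟩
    refine Quot.sound ⟨?_, ?_⟩
    · rcases h with h | h | h
      · exact Or.inl h
      · exact Or.inr (Or.inl h)
      · exact Or.inr (Or.inr (by rw [h, hf]))
    · rcases h' with h | h | h
      · exact Or.inl h
      · exact Or.inr (Or.inl h)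
      · exact Or.inr (Or.inr (by rw [h, hf]))

/-- The relation on `K ⊕ K` generating the wedge `K ∨ K`: the two basepoints are identified. -/
def wedgeRel {K : Type u} (k₀ : K) : K ⊕ K → K ⊕ K → Prop := fun p q =>
  (p = Sum.inl k₀ ∨ p = Sum.inr k₀) ∧ (q = Sum.inl k₀ ∨ q = Sum.inr k₀)

/-- The wedge `K ∨ K` of two copies of the pointed space `(K, k₀)`. -/
abbrev Wedge {K : Type u} [TopologicalSpace K] (k₀ : K) := Quot (wedgeRel k₀)

/-- The inclusion of the first wedge summand. -/
def wIn₁ {K : Type u} [TopologicalSpace K] (k₀ : K) (x : K) : Wedge k₀ :=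
  Quot.mk _ (Sum.inl x)

/-- The inclusion of the second wedge summand. -/
def wIn₂ {K : Type u} [TopologicalSpace K] (k₀ : K) (y : K) : Wedge k₀ :=
  Quot.mk _ (Sum.inr y)

/-- The basepoint of the wedge. -/
def wedgePt {K : Type u} [TopologicalSpace K] (k₀ : K) : Wedge k₀ := wIn₁ k₀ k₀

/-- The swap of the two wedge summands, `in₁ x ↔ in₂ x`. -/
def wedgeSwap {K : Type u} [TopologicalSpace K] (k₀ : K) : Wedge k₀ → Wedge k₀ :=
  Quot.lift (fun p => Quot.mk _ p.swap) <| by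
    rintro p q ⟨hp, hq⟩
    refine Quot.sound ⟨?_, ?_⟩
    · rcases hp with h | h <;> subst h <;> simp [Sum.swap]
    · rcases hq with h | h <;> subst h <;> simp [Sum.swap]

theorem wedgeSwap_pt {K : Type u} [TopologicalSpace K] (k₀ : K) :
    wedgeSwap k₀ (wedgePt k₀) = wedgePt k₀ :=
  Quot.sound ⟨Or.inr rfl, Or.inl rfl⟩

/-- The involution of `Σ(K ∨ K)` which is the identity on the suspension coordinate and
swaps the two wedge summands. -/
def suspWedgeInv {K : Type u} [TopologicalSpace K] (k₀ : K) :
    Susp (Wedge k₀) (wedgePt k₀) → Susp (Wedge k₀) (wedgePt k₀) :=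
  suspMap (wedgePt k₀) (wedgePt k₀) (wedgeSwap k₀) (wedgeSwap_pt k₀)


/-! ### Auxiliary constructions for the proof -/

lemma suspPtR_degen {L : Type u} [TopologicalSpace L] (l₀ : L) {t t' : ℝ} {z z' : L}
    (h : t ≤ 0 ∨ 1 ≤ t ∨ z = l₀) (h' : t' ≤ 0 ∨ 1 ≤ t' ∨ z' = l₀) :
    suspPtR l₀ t z = suspPtR l₀ t' z' := by
  apply Quot.sound
  constructor
  · rcases h with h | h | h
    · exact Or.inl (Subtype.ext (by rw [Set.projIcc_of_le_left _ h]; simp))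
    · exact Or.inr (Or.inl (Subtype.ext (by rw [Set.projIcc_of_right_le _ h]; simp)))
    · exact Or.inr (Or.inr h)
  · rcases h' with h | h | h
    · exact Or.inl (Subtype.ext (by rw [Set.projIcc_of_le_left _ h]; simp))
    · exact Or.inr (Or.inl (Subtype.ext (by rw [Set.projIcc_of_right_le _ h]; simp)))
    · exact Or.inr (Or.inr h)

open Classical in
/-- The piecewise formula on `K × K × I`. -/
noncomputable def Wfun {K : Type u} [TopologicalSpace K] (k₀ : K) :
    K × K × I → Susp (Wedge k₀) (wedgePt k₀) := fun p =>
  if ((p.2.2 : ℝ)) ≤ 1 / 4 then suspPtR (wedgePt k₀) (4 * p.2.2) (wIn₁ k₀ p.1)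
  else if ((p.2.2 : ℝ)) ≤ 1 / 2 then suspPtR (wedgePt k₀) (4 * p.2.2 - 1) (wIn₂ k₀ p.2.1)
  else if ((p.2.2 : ℝ)) ≤ 3 / 4 then suspPtR (wedgePt k₀) (3 - 4 * p.2.2) (wIn₁ k₀ p.1)
  else suspPtR (wedgePt k₀) (4 - 4 * p.2.2) (wIn₂ k₀ p.2.1)

lemma Wfun_le_quarter {K : Type u} [TopologicalSpace K] (k₀ : K) (x y : K) (t : I)
    (ht : (t : ℝ) ≤ 1 / 4) :
    Wfun k₀ (x, y, t) = suspPtR (wedgePt k₀) (4 * t) (wIn₁ k₀ x) := by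
  simp only [Wfun, if_pos ht]

lemma Wfun_mem2 {K : Type u} [TopologicalSpace K] (k₀ : K) (x y : K) (t : I)
    (h1 : 1 / 4 ≤ (t : ℝ)) (h2 : (t : ℝ) ≤ 1 / 2) :
    Wfun k₀ (x, y, t) = suspPtR (wedgePt k₀) (4 * t - 1) (wIn₂ k₀ y) := by
  by_cases h : (t : ℝ) ≤ 1 / 4
  · simp only [Wfun, if_pos h]
    exact suspPtR_degen _ (Or.inr (Or.inl (by linarith))) (Or.inl (by linarith))
  · simp only [Wfun, if_neg h, if_pos h2]

lemma Wfun_mem3 {K : Type u} [TopologicalSpace K] (k₀ : K) (x y : K) (t : I)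
    (h1 : 1 / 2 ≤ (t : ℝ)) (h2 : (t : ℝ) ≤ 3 / 4) :
    Wfun k₀ (x, y, t) = suspPtR (wedgePt k₀) (3 - 4 * t) (wIn₁ k₀ x) := by
  by_cases h : (t : ℝ) ≤ 1 / 2
  · rw [Wfun_mem2 k₀ x y t (by linarith) h]
    exact suspPtR_degen _ (Or.inr (Or.inl (by linarith))) (Or.inr (Or.inl (by linarith)))
  · simp only [Wfun, if_neg (by linarith : ¬ ((t : ℝ) ≤ 1 / 4)), if_neg h, if_pos h2]

lemma Wfun_mem4 {K : Type u} [TopologicalSpace K] (k₀ : K) (x y : K) (t : I)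
    (h1 : 3 / 4 ≤ (t : ℝ)) :
    Wfun k₀ (x, y, t) = suspPtR (wedgePt k₀) (4 - 4 * t) (wIn₂ k₀ y) := by
  by_cases h : (t : ℝ) ≤ 3 / 4
  · rw [Wfun_mem3 k₀ x y t (by linarith) h]
    exact suspPtR_degen _ (Or.inl (by linarith)) (Or.inr (Or.inl (by linarith)))
  · simp only [Wfun, if_neg (by linarith : ¬ ((t : ℝ) ≤ 1 / 4)),
      if_neg (by linarith : ¬ ((t : ℝ) ≤ 1 / 2)), if_neg h]

lemma Wfun_respects {K : Type u} [TopologicalSpace K] (k₀ : K) :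
    ∀ p q, joinRel K p q → Wfun k₀ p = Wfun k₀ q := by
  rintro ⟨x, y, t⟩ ⟨x', y', t'⟩ (⟨h1, h2, h3⟩ | ⟨h1, h2, h3⟩) <;>
      dsimp only at h1 h2 h3 ⊢ <;> subst h1 <;> subst h2 <;> subst h3
  · rw [Wfun_le_quarter k₀ x y 0 (by norm_num), Wfun_le_quarter k₀ x' y 0 (by norm_num)]
    exact suspPtR_degen _ (Or.inl (by norm_num)) (Or.inl (by norm_num))
  · rw [Wfun_mem4 k₀ x y 1 (by norm_num), Wfun_mem4 k₀ x y' 1 (by norm_num)]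
    exact suspPtR_degen _ (Or.inl (by norm_num)) (Or.inl (by norm_num))

lemma continuous_suspPtR_comp {L : Type u} [TopologicalSpace L] (l₀ : L)
    {X : Type u} [TopologicalSpace X] {f : X → ℝ} {g : X → L}
    (hf : Continuous f) (hg : Continuous g) :
    Continuous (fun x => suspPtR l₀ (f x) (g x)) := by
  apply continuous_quot_mk.comp
  exact (continuous_projIcc.comp hf).prodMk hg

lemma continuous_Wfun {K : Type u} [TopologicalSpace K] (k₀ : K) :
    Continuous (Wfun k₀) := by
  have hx : Continuous fun p : K × K × I => p.1 := continuous_fst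
  have hy : Continuous fun p : K × K × I => p.2.1 := continuous_snd.fst
  have ht : Continuous fun p : K × K × I => ((p.2.2 : ℝ)) :=
    continuous_subtype_val.comp continuous_snd.snd
  have hin1 : Continuous fun p : K × K × I => wIn₁ k₀ p.1 :=
    continuous_quot_mk.comp (continuous_inl.comp hx)
  have hin2 : Continuous fun p : K × K × I => wIn₂ k₀ p.2.1 :=
    continuous_quot_mk.comp (continuous_inr.comp hy)
  have hA : Continuous fun p : K × K × I =>
      suspPtR (wedgePt k₀) (4 * p.2.2) (wIn₁ k₀ p.1) :=
    continuous_suspPtR_comp _ (by continuity) hin1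
  have hB : Continuous fun p : K × K × I =>
      suspPtR (wedgePt k₀) (4 * p.2.2 - 1) (wIn₂ k₀ p.2.1) :=
    continuous_suspPtR_comp _ (by continuity) hin2
  have hC : Continuous fun p : K × K × I =>
      suspPtR (wedgePt k₀) (3 - 4 * p.2.2) (wIn₁ k₀ p.1) :=
    continuous_suspPtR_comp _ (by continuity) hin1
  have hD : Continuous fun p : K × K × I =>
      suspPtR (wedgePt k₀) (4 - 4 * p.2.2) (wIn₂ k₀ p.2.1) :=
    continuous_suspPtR_comp _ (by continuity) hin2
  unfold Wfun
  apply Continuous.if_le _ _ ht continuous_const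
  · rintro ⟨x, y, t⟩ h
    dsimp only at h ⊢
    rw [if_pos (by rw [h]; norm_num : ((t : ℝ)) ≤ 1 / 2)]
    exact suspPtR_degen _ (Or.inr (Or.inl (by rw [h]; norm_num)))
      (Or.inl (by rw [h]; norm_num))
  · exact hA
  apply Continuous.if_le _ _ ht continuous_const
  · rintro ⟨x, y, t⟩ h
    dsimp only at h ⊢
    rw [if_pos (by rw [h]; norm_num : ((t : ℝ)) ≤ 3 / 4)]
    exact suspPtR_degen _ (Or.inr (Or.inl (by rw [h]; norm_num)))
      (Or.inr (Or.inl (by rw [h]; norm_num)))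
  · exact hB
  apply Continuous.if_le hC hD ht continuous_const
  rintro ⟨x, y, t⟩ h
  dsimp only at h ⊢
  exact suspPtR_degen _ (Or.inl (by rw [h]; norm_num)) (Or.inr (Or.inl (by rw [h]; norm_num)))

lemma suspWedgeInv_suspPtR {K : Type u} [TopologicalSpace K] (k₀ : K) (t : ℝ)
    (z : Wedge k₀) :
    suspWedgeInv k₀ (suspPtR (wedgePt k₀) t z) = suspPtR (wedgePt k₀) t (wedgeSwap k₀ z) :=
  rfl

/-- The piecewise formula `(x, y, t) ↦ (4t, in₁ x)` for `t ∈ [0, 1/4]`,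
`(4t − 1, in₂ y)` for `t ∈ [1/4, 1/2]`, `(3 − 4t, in₁ x)` for `t ∈ [1/2, 3/4]`, and
`(4 − 4t, in₂ y)` for `t ∈ [3/4, 1]`, descends to a well-defined continuous map
`W̃mod : K ∗ K → Σ(K ∨ K)`, and this map is `ℤ/2`-equivariant with respect to the involution
`[x, y, t] ↦ [y, x, 1 − t]` of the join and the involution of `Σ(K ∨ K)` which is the identity
on the suspension coordinate and swaps the two wedge summands. -/
theorem exists_equivariant_whitehead_wedge_map
    (K : Type u) [TopologicalSpace K] (k₀ : K) :
    ∃ Wmod : C(Join K, Susp (Wedge k₀) (wedgePt k₀)),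
      (∀ (x y : K) (t : I), (t : ℝ) ≤ 1 / 4 →
        Wmod (joinMk x y t) = suspPtR (wedgePt k₀) (4 * t) (wIn₁ k₀ x)) ∧
      (∀ (x y : K) (t : I), 1 / 4 ≤ (t : ℝ) → (t : ℝ) ≤ 1 / 2 →
        Wmod (joinMk x y t) = suspPtR (wedgePt k₀) (4 * t - 1) (wIn₂ k₀ y)) ∧
      (∀ (x y : K) (t : I), 1 / 2 ≤ (t : ℝ) → (t : ℝ) ≤ 3 / 4 →
        Wmod (joinMk x y t) = suspPtR (wedgePt k₀) (3 - 4 * t) (wIn₁ k₀ x)) ∧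
      (∀ (x y : K) (t : I), 3 / 4 ≤ (t : ℝ) →
        Wmod (joinMk x y t) = suspPtR (wedgePt k₀) (4 - 4 * t) (wIn₂ k₀ y)) ∧
      (∀ p : Join K, Wmod (joinInv p) = suspWedgeInv k₀ (Wmod p)) := by
  refine ⟨⟨Quot.lift (Wfun k₀) (Wfun_respects k₀), continuous_quot_lift _ (continuous_Wfun k₀)⟩,
    ?_, ?_, ?_, ?_, ?_⟩
  · intro x y t ht; exact Wfun_le_quarter k₀ x y t ht
  · intro x y t h1 h2; exact Wfun_mem2 k₀ x y t h1 h2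
  · intro x y t h1 h2; exact Wfun_mem3 k₀ x y t h1 h2
  · intro x y t h1; exact Wfun_mem4 k₀ x y t h1
  · rintro ⟨x, y, t⟩
    show Wfun k₀ (y, x, σ t) = suspWedgeInv k₀ (Wfun k₀ (x, y, t))
    have hst : ((σ t : ℝ)) = 1 - (t : ℝ) := coe_symm_eq t
    have h01 := t.2.1
    have h02 := t.2.2
    rcases le_total ((t : ℝ)) (1 / 2) with h | h
    · rcases le_total ((t : ℝ)) (1 / 4) with h' | h'
      · rw [Wfun_le_quarter k₀ x y t h', Wfun_mem4 k₀ y x (σ t) (by rw [hst]; linarith),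
          suspWedgeInv_suspPtR, hst]
        show _ = suspPtR (wedgePt k₀) (4 * (t:ℝ)) (wIn₂ k₀ x)
        congr 1; ring
      · rw [Wfun_mem2 k₀ x y t h' h, Wfun_mem3 k₀ y x (σ t) (by rw [hst]; linarith)
          (by rw [hst]; linarith), suspWedgeInv_suspPtR, hst]
        show _ = suspPtR (wedgePt k₀) (4 * (t:ℝ) - 1) (wIn₁ k₀ y)
        congr 1; ring
    · rcases le_total ((t : ℝ)) (3 / 4) with h' | h'
      · rw [Wfun_mem3 k₀ x y t h h', Wfun_mem2 k₀ y x (σ t) (by rw [hst]; linarith)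
          (by rw [hst]; linarith), suspWedgeInv_suspPtR, hst]
        show _ = suspPtR (wedgePt k₀) (3 - 4 * (t:ℝ)) (wIn₂ k₀ x)
        congr 1; ring
      · rw [Wfun_mem4 k₀ x y t h', Wfun_le_quarter k₀ y x (σ t) (by rw [hst]; linarith),
          suspWedgeInv_suspPtR, hst]
        show _ = suspPtR (wedgePt k₀) (4 - 4 * (t:ℝ)) (wIn₁ k₀ y)
        congr 1; ring
end

section
/- Let ℓ ≥ 2 and set j = 2^{φ(ℓ−1)}, where φ is the Adams number function. Then there is a homeomorphism Φ : S(ℓα) ×_{ℤ/2} S^{jα} → ℝP^{ℓ−1} × S^j over ℝP^{ℓ−1} (i.e., commuting with the projections to ℝP^{ℓ−1}, where the projection of the source is induced by (s, v) ↦ [s]) which preserves the distinguished sections: there are two fixed antipodal points n, s ∈ S^j such that Φ carries the class of (s, 0) to ([s], n) and the class of (s, ∞) to ([s], s) for every s ∈ S(ℓα). -/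
/-- The Adams number `φ(ℓ)`: the number of integers `n` with `1 ≤ n ≤ ℓ` and
`n ≡ 0, 1, 2, 4 (mod 8)`. -/
def adamsPhi (ℓ : ℕ) : ℕ :=
  ((Finset.Icc 1 ℓ).filter fun n => n % 8 = 0 ∨ n % 8 = 1 ∨ n % 8 = 2 ∨ n % 8 = 4).card

open OnePoint

/-- Euclidean `n`-space. -/
abbrev Euc (n : ℕ) := EuclideanSpace ℝ (Fin n)

/-- The unit sphere `S^{n-1} ⊆ ℝ^n`. -/
abbrev Sph (n : ℕ) := Metric.sphere (0 : Euc n) 1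

/-- A distinguished point (the first standard basis vector) on the unit sphere of `ℝ^n`. -/
noncomputable def sphPt (n : ℕ) (h : 0 < n) : Sph n :=
  ⟨EuclideanSpace.single (⟨0, h⟩ : Fin n) (1 : ℝ), by
    simp [mem_sphere_iff_norm, EuclideanSpace.norm_single]⟩

/-- The antipodal relation on the unit sphere of `ℝ^n`. -/
def antipRel (n : ℕ) : Sph n → Sph n → Prop := fun s t => (t : Euc n) = -(s : Euc n)

/-- Real projective space `ℝP^{n-1}`, as the quotient of the unit sphere `S^{n-1} ⊆ ℝ^n`
by the antipodal map. -/
abbrev RealProj (n : ℕ) := Quot (antipRel n)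

/-- The class of a unit vector in `ℝP^{n-1}`. -/
def projMk {n : ℕ} (s : Sph n) : RealProj n := Quot.mk _ s

/-- `x ∈ ℝ^n` lies in the subspace spanned by the first `j` coordinates. -/
def inFirstCoords (j : ℕ) {n : ℕ} (x : Euc n) : Prop := ∀ i : Fin n, j ≤ (i : ℕ) → x i = 0

/-- The relation collapsing the copy of `ℝP^{j-1}` (spanned by the first `j` coordinates)
inside `ℝP^{n-1}` to a point. -/
def stuntedRel (n j : ℕ) : RealProj n → RealProj n → Prop := fun p q =>
  (∃ s : Sph n, p = projMk s ∧ inFirstCoords j (s : Euc n)) ∧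
  (∃ s : Sph n, q = projMk s ∧ inFirstCoords j (s : Euc n))

/-- The stunted projective space `ℝP^{n-1}/ℝP^{j-1}`. -/
abbrev Stunted (n j : ℕ) := Quot (stuntedRel n j)

/-- The basepoint of the stunted projective space. -/
noncomputable def stuntedPt (n j : ℕ) (h : 0 < n) : Stunted n j := Quot.mk _ (projMk (sphPt n h))

/-- The involution of the one-point compactification `S^{jα}` of `ℝ^j`
induced by `v ↦ -v`, fixing the point at infinity. -/
def opNeg (j : ℕ) : OnePoint (Euc j) → OnePoint (Euc j) := OnePoint.map fun v => -v

/-- The quotient of `S(nα) × B` identifying `(s, b) ∼ (−s, σ b)` and collapsing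
`S(nα) × {b₀}` to a point; for `B = K ∧ K` this is `S(nα)₊ ∧_{ℤ/2} (K ∧ K)`. -/
def borelSmashRel (n : ℕ) {B : Type*} (b₀ : B) (inv : B → B) :
    Sph n × B → Sph n × B → Prop := fun p q =>
  (p.2 = b₀ ∧ q.2 = b₀) ∨ ((q.1 : Euc n) = -(p.1 : Euc n) ∧ q.2 = inv p.2)

/-- The relation on `S(nα) × B` identifying `(s, b) ∼ (−s, inv b)`; its quotient is the
balanced product `S(nα) ×_{ℤ/2} B`. -/
def borelProdRel (n : ℕ) {B : Type*} (inv : B → B) :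
    Sph n × B → Sph n × B → Prop := fun p q =>
  (q.1 : Euc n) = -(p.1 : Euc n) ∧ q.2 = inv p.2

/-- The balanced product `S(nα) ×_{ℤ/2} B` of the antipodal sphere with a `ℤ/2`-space. -/
abbrev BorelProd (n : ℕ) {B : Type*} [TopologicalSpace B] (inv : B → B) :=
  Quot (borelProdRel n inv)


/-! ### Auxiliary: Clifford families of matrices -/

open Matrix
open Kronecker

structure CliffFam (R : Type) [CommRing R] (m : ℕ) (n : Type) [Fintype n] [DecidableEq n] where
  E : Fin m → Matrix n n R
  sq : ∀ i, E i * E i = -1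
  skew : ∀ i, (E i)ᵀ = - E i
  anti : ∀ i k, i ≠ k → E i * E k = -(E k * E i)

structure CliffFamP (R : Type) [CommRing R] (m : ℕ) (n : Type) [Fintype n] [DecidableEq n]
    extends CliffFam R m n where
  P : Matrix n n R
  Psymm : Pᵀ = P
  Psq : P * P = 1
  Panti : ∀ i, P * E i = -(E i * P)

variable {R : Type} [CommRing R] {m m' : ℕ} {n p : Type} [Fintype n] [DecidableEq n]
  [Fintype p] [DecidableEq p]

def CliffFam.empty : CliffFam R 0 (Fin 1) where
  E := Fin.elim0
  sq i := i.elim0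
  skew i := i.elim0
  anti i := i.elim0

def CliffFam.double (c : CliffFam R m n) : CliffFamP R (m + 1) (n ⊕ n) where
  E := Fin.snoc (fun i => fromBlocks (c.E i) 0 0 (-(c.E i))) (fromBlocks 0 (-1) 1 0)
  sq i := by
    refine Fin.lastCases ?_ (fun i => ?_) i <;>
      simp [fromBlocks_multiply, c.sq, Matrix.fromBlocks_neg, ← fromBlocks_one]
  skew i := by
    refine Fin.lastCases ?_ (fun i => ?_) i <;>
      simp [fromBlocks_transpose, c.skew, Matrix.fromBlocks_neg]
  anti i k := by
    refine Fin.lastCases ?_ (fun i' => ?_) i <;> refine Fin.lastCases ?_ (fun k' => ?_) k <;>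
        intro hik
    · exact absurd rfl hik
    · simp [fromBlocks_multiply, Matrix.fromBlocks_neg]
    · simp [fromBlocks_multiply, Matrix.fromBlocks_neg]
    · have h : i' ≠ k' := fun h => hik (by rw [h])
      simp [fromBlocks_multiply, Matrix.fromBlocks_neg, c.anti _ _ h]
  P := fromBlocks 0 1 1 0
  Psymm := by simp [fromBlocks_transpose]
  Psq := by simp [fromBlocks_multiply, ← fromBlocks_one]
  Panti i := by
    refine Fin.lastCases ?_ (fun i' => ?_) i <;>
      simp [fromBlocks_multiply, Matrix.fromBlocks_neg]

omit [Fintype n] [DecidableEq n] [Fintype p] [DecidableEq p] in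
lemma neg_kronecker (A : Matrix n n R) (B : Matrix p p R) : (-A) ⊗ₖ B = -(A ⊗ₖ B) := by
  ext ⟨i,i'⟩ ⟨k,k'⟩; simp [kroneckerMap_apply]

omit [Fintype n] [DecidableEq n] [Fintype p] [DecidableEq p] in
lemma kronecker_neg (A : Matrix n n R) (B : Matrix p p R) : A ⊗ₖ (-B) = -(A ⊗ₖ B) := by
  ext ⟨i,i'⟩ ⟨k,k'⟩; simp [kroneckerMap_apply]

def CliffFam.tensor (c : CliffFam R m n) (d : CliffFamP R m' p) : CliffFam R (m + m') (n × p) where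
  E := Fin.addCases (fun i => c.E i ⊗ₖ d.P) (fun i => (1 : Matrix n n R) ⊗ₖ d.E i)
  sq i := by
    refine Fin.addCases (fun i => ?_) (fun i => ?_) i <;>
      simp only [Fin.addCases_left, Fin.addCases_right, ← mul_kronecker_mul, c.sq, d.sq,
        d.Psq, one_mul, neg_kronecker, kronecker_neg, one_kronecker_one]
  skew i := by
    refine Fin.addCases (fun i => ?_) (fun i => ?_) i <;>
      simp only [Fin.addCases_left, Fin.addCases_right, ← kroneckerMap_transpose, c.skew,
        d.skew, d.Psymm, transpose_one, neg_kronecker, kronecker_neg]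
  anti i k := by
    refine Fin.addCases (fun i' => ?_) (fun i' => ?_) i <;>
        refine Fin.addCases (fun k' => ?_) (fun k' => ?_) k <;> intro hik
    · have h : i' ≠ k' := fun h => hik (by rw [h])
      simp only [Fin.addCases_left, ← mul_kronecker_mul, d.Psq, c.anti _ _ h, neg_kronecker]
    · simp only [Fin.addCases_left, Fin.addCases_right, ← mul_kronecker_mul,
        one_mul, mul_one, d.Panti, kronecker_neg]
    · simp only [Fin.addCases_left, Fin.addCases_right, ← mul_kronecker_mul,
        one_mul, mul_one, d.Panti, neg_kronecker, kronecker_neg, neg_neg]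
    · have h : i' ≠ k' := fun h => hik (by rw [h])
      simp only [Fin.addCases_right, ← mul_kronecker_mul, one_mul, d.anti _ _ h, kronecker_neg]

/-! concrete base families over ℤ -/

def octM : Fin 7 → Matrix (Fin 8) (Fin 8) ℤ := ![
  !![0, -1, 0, 0, 0, 0, 0, 0; 1, 0, 0, 0, 0, 0, 0, 0; 0, 0, 0, -1, 0, 0, 0, 0; 0, 0, 1, 0, 0, 0, 0, 0; 0, 0, 0, 0, 0, -1, 0, 0; 0, 0, 0, 0, 1, 0, 0, 0; 0, 0, 0, 0, 0, 0, 0, 1; 0, 0, 0, 0, 0, 0, -1, 0],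
  !![0, 0, -1, 0, 0, 0, 0, 0; 0, 0, 0, 1, 0, 0, 0, 0; 1, 0, 0, 0, 0, 0, 0, 0; 0, -1, 0, 0, 0, 0, 0, 0; 0, 0, 0, 0, 0, 0, -1, 0; 0, 0, 0, 0, 0, 0, 0, -1; 0, 0, 0, 0, 1, 0, 0, 0; 0, 0, 0, 0, 0, 1, 0, 0],
  !![0, 0, 0, -1, 0, 0, 0, 0; 0, 0, -1, 0, 0, 0, 0, 0; 0, 1, 0, 0, 0, 0, 0, 0; 1, 0, 0, 0, 0, 0, 0, 0; 0, 0, 0, 0, 0, 0, 0, -1; 0, 0, 0, 0, 0, 0, 1, 0; 0, 0, 0, 0, 0, -1, 0, 0; 0, 0, 0, 0, 1, 0, 0, 0],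
  !![0, 0, 0, 0, -1, 0, 0, 0; 0, 0, 0, 0, 0, 1, 0, 0; 0, 0, 0, 0, 0, 0, 1, 0; 0, 0, 0, 0, 0, 0, 0, 1; 1, 0, 0, 0, 0, 0, 0, 0; 0, -1, 0, 0, 0, 0, 0, 0; 0, 0, -1, 0, 0, 0, 0, 0; 0, 0, 0, -1, 0, 0, 0, 0],
  !![0, 0, 0, 0, 0, -1, 0, 0; 0, 0, 0, 0, -1, 0, 0, 0; 0, 0, 0, 0, 0, 0, 0, 1; 0, 0, 0, 0, 0, 0, -1, 0; 0, 1, 0, 0, 0, 0, 0, 0; 1, 0, 0, 0, 0, 0, 0, 0; 0, 0, 0, 1, 0, 0, 0, 0; 0, 0, -1, 0, 0, 0, 0, 0],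
  !![0, 0, 0, 0, 0, 0, -1, 0; 0, 0, 0, 0, 0, 0, 0, -1; 0, 0, 0, 0, -1, 0, 0, 0; 0, 0, 0, 0, 0, 1, 0, 0; 0, 0, 1, 0, 0, 0, 0, 0; 0, 0, 0, -1, 0, 0, 0, 0; 1, 0, 0, 0, 0, 0, 0, 0; 0, 1, 0, 0, 0, 0, 0, 0],
  !![0, 0, 0, 0, 0, 0, 0, -1; 0, 0, 0, 0, 0, 0, 1, 0; 0, 0, 0, 0, 0, -1, 0, 0; 0, 0, 0, 0, -1, 0, 0, 0; 0, 0, 0, 1, 0, 0, 0, 0; 0, 0, 1, 0, 0, 0, 0, 0; 0, -1, 0, 0, 0, 0, 0, 0; 1, 0, 0, 0, 0, 0, 0, 0]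
]

def quatM : Fin 3 → Matrix (Fin 4) (Fin 4) ℤ := ![
  !![0,-1,0,0; 1,0,0,0; 0,0,0,-1; 0,0,1,0],
  !![0,0,-1,0; 0,0,0,1; 1,0,0,0; 0,-1,0,0],
  !![0,0,0,-1; 0,0,-1,0; 0,1,0,0; 1,0,0,0]]

set_option maxRecDepth 100000 in
def quatFamZ : CliffFam ℤ 3 (Fin 4) where
  E := quatM
  sq := by decide
  skew := by decide
  anti := by decide

set_option maxRecDepth 1000000 in
def octFamZ : CliffFam ℤ 7 (Fin 8) where
  E := octM
  sq := by decide
  skew := by decide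
  anti := by decide

/-! cast to ℝ -/

lemma matIntCast_mul (A B : Matrix n n ℤ) :
    ((A * B).map (Int.cast : ℤ → ℝ)) = A.map Int.cast * B.map Int.cast :=
  Matrix.map_mul (f := Int.castRingHom ℝ)

def CliffFam.castReal (c : CliffFam ℤ m n) : CliffFam ℝ m n where
  E i := (c.E i).map (Int.cast : ℤ → ℝ)
  sq i := by
    rw [← matIntCast_mul, c.sq]; ext a b
    simp [Matrix.map_apply, Matrix.one_apply, apply_ite (Int.cast : ℤ → ℝ)]
  skew i := by
    rw [← Matrix.transpose_map, c.skew]; ext a b; simp [Matrix.map_apply]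
  anti i k h := by
    rw [← matIntCast_mul, ← matIntCast_mul, c.anti _ _ h]; ext a b
    simp [Matrix.map_apply]

/-! restrict and reindex -/

def CliffFam.restrict (c : CliffFam R m' n) (h : m ≤ m') : CliffFam R m n where
  E i := c.E (Fin.castLE h i)
  sq i := c.sq _
  skew i := c.skew _
  anti i k hik := c.anti _ _ (fun hc => hik (Fin.castLE_injective h hc))

def CliffFam.reindex {n' : Type} [Fintype n'] [DecidableEq n'] (c : CliffFam R m n)
    (e : n ≃ n') : CliffFam R m n' where
  E i := (c.E i).submatrix e.symm e.symm
  sq i := by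
    rw [Matrix.submatrix_mul_equiv, c.sq]; ext a b
    simp [Matrix.submatrix_apply, Matrix.one_apply, (Equiv.injective e.symm).eq_iff]
  skew i := by rw [Matrix.transpose_submatrix, c.skew]; rfl
  anti i k hik := by
    rw [Matrix.submatrix_mul_equiv, Matrix.submatrix_mul_equiv, c.anti _ _ hik]; rfl

/-! the tower -/

def rh : ℕ → ℕ
  | 0 => 0
  | 1 => 1
  | 2 => 3
  | 3 => 7
  | (k+4) => rh k + 8

def tau : ℕ → Type
  | 0 => Fin 1
  | 1 => Fin 1 ⊕ Fin 1
  | 2 => Fin 4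
  | 3 => Fin 8
  | (k+4) => tau k × (Fin 8 ⊕ Fin 8)

def tauFintype : ∀ k, Fintype (tau k)
  | 0 => inferInstanceAs (Fintype (Fin 1))
  | 1 => inferInstanceAs (Fintype (Fin 1 ⊕ Fin 1))
  | 2 => inferInstanceAs (Fintype (Fin 4))
  | 3 => inferInstanceAs (Fintype (Fin 8))
  | (k+4) => @instFintypeProd _ _ (tauFintype k) (inferInstanceAs (Fintype (Fin 8 ⊕ Fin 8)))

instance instTauFintype (k : ℕ) : Fintype (tau k) := tauFintype k

def tauDecEq : ∀ k, DecidableEq (tau k)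
  | 0 => inferInstanceAs (DecidableEq (Fin 1))
  | 1 => inferInstanceAs (DecidableEq (Fin 1 ⊕ Fin 1))
  | 2 => inferInstanceAs (DecidableEq (Fin 4))
  | 3 => inferInstanceAs (DecidableEq (Fin 8))
  | (k+4) => @instDecidableEqProd _ _ (tauDecEq k) (inferInstanceAs (DecidableEq (Fin 8 ⊕ Fin 8)))

instance instTauDecEq (k : ℕ) : DecidableEq (tau k) := tauDecEq k

lemma card_tau : ∀ k, Fintype.card (tau k) = 2 ^ k
  | 0 => rfl
  | 1 => rfl
  | 2 => rfl
  | 3 => rfl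
  | (k+4) => by
    have ih := card_tau k
    have h2 : Fintype.card (tau (k+4)) = Fintype.card (tau k) * Fintype.card (Fin 8 ⊕ Fin 8) :=
      Fintype.card_prod _ _
    rw [h2, ih]; simp; ring

noncomputable def famP16 : CliffFamP ℝ 8 (Fin 8 ⊕ Fin 8) := (octFamZ.castReal).double

noncomputable def fam : ∀ k, CliffFam ℝ (rh k) (tau k)
  | 0 => CliffFam.empty
  | 1 => (CliffFam.empty.double).toCliffFam
  | 2 => quatFamZ.castReal
  | 3 => octFamZ.castReal
  | (k+4) => (fam k).tensor famP16

/-! arithmetic: `m ≤ rh (adamsPhi m)` -/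

lemma adamsPhi_succ (m : ℕ) :
    adamsPhi (m+1) = adamsPhi m +
      (if ((m+1) % 8 = 0 ∨ (m+1) % 8 = 1 ∨ (m+1) % 8 = 2 ∨ (m+1) % 8 = 4) then 1 else 0) := by
  unfold adamsPhi
  rw [← Finset.insert_Icc_right_eq_Icc_add_one (by omega : (1:ℕ) ≤ m + 1)]
  rw [Finset.filter_insert]
  split_ifs with h
  · rw [Finset.card_insert_of_notMem (by simp)]
  · simp

lemma adamsPhi_add_eight : ∀ m, adamsPhi (m+8) = adamsPhi m + 4
  | 0 => by decide
  | (m+1) => by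
    have ih := adamsPhi_add_eight m
    rw [show m+1+8 = (m+8)+1 by ring, adamsPhi_succ (m+8), ih, adamsPhi_succ m,
      show (m+8+1) % 8 = (m+1) % 8 by omega]
    split_ifs <;> omega

lemma le_rh_adamsPhi : ∀ m, 1 ≤ m → m ≤ rh (adamsPhi m) := by
  intro m
  induction m using Nat.strong_induction_on with
  | _ m ih =>
    intro h1
    rcases le_or_gt m 8 with h|h
    · interval_cases m <;> decide
    · obtain ⟨m', rfl⟩ : ∃ m', m = m' + 8 := ⟨m - 8, by omega⟩
      rw [adamsPhi_add_eight, show rh (adamsPhi m' + 4) = rh (adamsPhi m') + 8 from rfl]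
      have := ih m' (by omega) (by omega)
      omega

noncomputable def finalFam (m j : ℕ) (h1 : 1 ≤ m) (hj : j = 2 ^ adamsPhi m) :
    CliffFam ℝ m (Fin j) :=
  ((fam (adamsPhi m)).restrict (le_rh_adamsPhi m h1)).reindex
    (Fintype.equivFinOfCardEq (by rw [card_tau, hj]))



/-! ### Clifford multiplication on Euclidean space -/

open scoped RealInnerProductSpace

lemma euc_norm_sq {d : ℕ} (x : Euc d) : ‖x‖^2 = ∑ i, (x i)^2 := by
  rw [EuclideanSpace.norm_eq, Real.sq_sqrt (by positivity)]
  simp [sq_abs]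

lemma euc_inner_eq {d : ℕ} (x y : Euc d) : ⟪x, y⟫ = ∑ i, x i * y i := by
  rw [PiLp.inner_apply]
  simp [RCLike.inner_apply, mul_comm]

noncomputable def cMat {R : Type} [CommRing R] {m d : ℕ} (c : CliffFam R m (Fin d))
    (s : Fin (m+1) → R) : Matrix (Fin d) (Fin d) R :=
  s 0 • (1 : Matrix (Fin d) (Fin d) R) + ∑ i : Fin m, s i.succ • c.E i

lemma cMat_transpose_mul {m d : ℕ} (c : CliffFam ℝ m (Fin d)) (s : Euc (m+1)) :
    (cMat c s)ᵀ * cMat c s = (‖s‖^2) • 1 := by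
  classical
  set A := (s 0) • (1 : Matrix (Fin d) (Fin d) ℝ) with hA
  set B := ∑ i : Fin m, s i.succ • c.E i with hB
  have hAT : Aᵀ = A := by simp [hA]
  have hBT : Bᵀ = -B := by
    simp [hB, Matrix.transpose_sum, Matrix.transpose_smul, c.skew, smul_neg,
      ← Finset.sum_neg_distrib]
  have hAB : A * B = B * A := by simp [hA, Matrix.smul_mul, Matrix.mul_smul]
  have hBB : B * B = -((∑ i : Fin m, (s i.succ)^2) • (1 : Matrix (Fin d) (Fin d) ℝ)) := by
    rw [hB, Finset.sum_mul_sum]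
    have key : ∀ i k : Fin m, (s i.succ • c.E i) * (s k.succ • c.E k)
        = (s i.succ * s k.succ) • (c.E i * c.E k) := fun i k => by
      rw [Matrix.smul_mul, Matrix.mul_smul, smul_smul]
    simp only [key]
    have hsplit :
        (∑ i : Fin m, ∑ k : Fin m, (s i.succ * s k.succ) • (c.E i * c.E k))
        = (∑ p ∈ Finset.univ.diag, (s p.1.succ * s p.2.succ) • (c.E p.1 * c.E p.2))
          + (∑ p ∈ Finset.univ.offDiag, (s p.1.succ * s p.2.succ) • (c.E p.1 * c.E p.2)) := by
      rw [← Finset.sum_union (Finset.disjoint_diag_offDiag _),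
        Finset.diag_union_offDiag, ← Finset.sum_product']
    rw [hsplit]
    have hdiag : (∑ p ∈ Finset.univ.diag, (s p.1.succ * s p.2.succ) • (c.E p.1 * c.E p.2))
        = -((∑ i : Fin m, (s i.succ)^2) • (1 : Matrix (Fin d) (Fin d) ℝ)) := by
      rw [Finset.sum_diag]
      have : ∀ i : Fin m, (s i.succ * s i.succ) • (c.E i * c.E i)
          = -(((s i.succ)^2) • (1 : Matrix (Fin d) (Fin d) ℝ)) := fun i => by
        rw [c.sq, sq]; simp
      simp only [this]
      rw [Finset.sum_neg_distrib, ← Finset.sum_smul]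
    have hoff : (∑ p ∈ Finset.univ.offDiag, (s p.1.succ * s p.2.succ) • (c.E p.1 * c.E p.2))
        = 0 := by
      refine Finset.sum_involution (fun p _ => (p.2, p.1)) ?_ ?_ ?_ ?_
      · rintro ⟨i, k⟩ hik
        rw [Finset.mem_offDiag] at hik
        have := c.anti i k hik.2.2
        simp only [this]
        rw [mul_comm]
        simp
      · rintro ⟨i, k⟩ hik _
        rw [Finset.mem_offDiag] at hik
        exact fun h => hik.2.2 (congrArg Prod.fst h).symm
      · rintro ⟨i, k⟩ hik
        rw [Finset.mem_offDiag] at hik ⊢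
        exact ⟨Finset.mem_univ _, Finset.mem_univ _, fun h => hik.2.2 h.symm⟩
      · rintro ⟨i, k⟩ hik
        rfl
    rw [hdiag, hoff, add_zero]
  have expand : (cMat c s)ᵀ * cMat c s = A * A - B * B := by
    have : (cMat c s)ᵀ = A - B := by
      rw [show cMat c s = A + B from rfl, Matrix.transpose_add, hAT, hBT, ← sub_eq_add_neg]
    rw [this, show cMat c s = A + B from rfl]
    rw [Matrix.sub_mul, Matrix.mul_add, Matrix.mul_add, hAB]
    abel
  rw [expand, hBB]
  have hAA : A * A = ((s 0)^2) • (1 : Matrix (Fin d) (Fin d) ℝ) := by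
    rw [hA, Matrix.smul_mul, Matrix.mul_smul, smul_smul, Matrix.one_mul, sq]
  rw [hAA, sub_neg_eq_add, ← add_smul]
  congr 1
  rw [euc_norm_sq, Fin.sum_univ_succ]

/-- matrix action on Euclidean space -/
def act {d : ℕ} (M : Matrix (Fin d) (Fin d) ℝ) (v : Euc d) : Euc d := WithLp.toLp 2 (M.mulVec v)

lemma act_apply {d : ℕ} (M : Matrix (Fin d) (Fin d) ℝ) (v : Euc d) (i : Fin d) :
    act M v i = ∑ k, M i k * v k := rfl

lemma act_neg {d : ℕ} (M : Matrix (Fin d) (Fin d) ℝ) (v : Euc d) :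
    act (-M) v = -(act M v) := by
  ext i
  show (-M).mulVec v i = -(M.mulVec v i)
  rw [Matrix.neg_mulVec]
  rfl

lemma act_negv {d : ℕ} (M : Matrix (Fin d) (Fin d) ℝ) (v : Euc d) :
    act M (-v) = -(act M v) := by
  ext i
  show M.mulVec (-(v : Fin d → ℝ)) i = -(M.mulVec v i)
  rw [Matrix.mulVec_neg]
  rfl

lemma act_zero {d : ℕ} (M : Matrix (Fin d) (Fin d) ℝ) : act M (0 : Euc d) = 0 := by
  ext i
  show M.mulVec (0 : Fin d → ℝ) i = 0
  rw [Matrix.mulVec_zero]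
  rfl

lemma act_act {d : ℕ} (M N : Matrix (Fin d) (Fin d) ℝ) (v : Euc d) :
    act M (act N v) = act (M * N) v := by
  ext i
  show M.mulVec (N.mulVec v) i = (M * N).mulVec v i
  rw [Matrix.mulVec_mulVec]

lemma act_one {d : ℕ} (v : Euc d) : act (1 : Matrix (Fin d) (Fin d) ℝ) v = v := by
  ext i
  show (1 : Matrix (Fin d) (Fin d) ℝ).mulVec v i = v i
  rw [Matrix.one_mulVec]

lemma norm_act {d : ℕ} {M : Matrix (Fin d) (Fin d) ℝ} {r : ℝ}
    (hM : Mᵀ * M = r • 1) (v : Euc d) : ‖act M v‖^2 = r * ‖v‖^2 := by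
  have h1 : ⟪act M v, act M v⟫ = r * ⟪v, v⟫ := by
    rw [euc_inner_eq, euc_inner_eq]
    have : ∀ x y : Euc d, (∑ i, x i * y i) = dotProduct (x : Fin d → ℝ) y := fun x y => rfl
    rw [this, this]
    show dotProduct (M.mulVec v) (M.mulVec v) = r * dotProduct (v : Fin d → ℝ) v
    rw [Matrix.dotProduct_mulVec, ← Matrix.mulVec_transpose, Matrix.mulVec_mulVec, hM,
      Matrix.smul_mulVec, Matrix.one_mulVec, smul_dotProduct]
    rfl
  rw [← real_inner_self_eq_norm_sq, ← real_inner_self_eq_norm_sq]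
  exact h1


/-! ### Inverse stereographic projection -/

noncomputable def padE {d : ℕ} (v : Euc d) : Euc (d+1) :=
  WithLp.toLp 2 (fun i : Fin (d+1) => if h : (i : ℕ) < d then v ⟨i, h⟩ else 0)

noncomputable def NE (d : ℕ) : Euc (d+1) := EuclideanSpace.single (Fin.last d) 1

lemma padE_castSucc {d : ℕ} (v : Euc d) (i : Fin d) : padE v i.castSucc = v i := by
  show dite _ _ _ = _
  rw [dif_pos (by simpa using i.isLt)]
  exact congrArg v (Fin.ext (by simp))

lemma padE_last {d : ℕ} (v : Euc d) : padE v (Fin.last d) = 0 := by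
  show dite _ _ _ = _
  rw [dif_neg (by simp)]

lemma NE_castSucc {d : ℕ} (i : Fin d) : NE d i.castSucc = 0 := by
  rw [NE, EuclideanSpace.single_apply, if_neg (by simp [Fin.ext_iff]; omega)]

lemma NE_last {d : ℕ} : NE d (Fin.last d) = 1 := by
  rw [NE, EuclideanSpace.single_apply, if_pos rfl]

lemma norm_NE {d : ℕ} : ‖NE d‖ = 1 := by
  rw [NE, EuclideanSpace.norm_single]; norm_num

lemma norm_padE {d : ℕ} (v : Euc d) : ‖padE v‖ = ‖v‖ := by
  have h : ‖padE v‖^2 = ‖v‖^2 := by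
    rw [euc_norm_sq, euc_norm_sq, Fin.sum_univ_castSucc, padE_last]
    simp [padE_castSucc]
  rw [← Real.sqrt_sq (norm_nonneg (padE v)), h, Real.sqrt_sq (norm_nonneg v)]

lemma inner_NE {d : ℕ} (x : Euc (d+1)) : ⟪x, NE d⟫ = x (Fin.last d) := by
  rw [euc_inner_eq, Fin.sum_univ_castSucc]
  simp [NE_castSucc, NE_last]

lemma inner_padE_NE {d : ℕ} (v : Euc d) : ⟪padE v, NE d⟫ = 0 := by
  rw [inner_NE, padE_last]

noncomputable def sigE {d : ℕ} (v : Euc d) : Euc (d+1) :=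
  (2/(‖v‖^2+1)) • padE v + ((‖v‖^2-1)/(‖v‖^2+1)) • NE d

lemma sigE_apply_last {d : ℕ} (v : Euc d) :
    sigE v (Fin.last d) = (‖v‖^2-1)/(‖v‖^2+1) := by
  show (2/(‖v‖^2+1)) • padE v (Fin.last d) + ((‖v‖^2-1)/(‖v‖^2+1)) • NE d (Fin.last d) = _
  rw [padE_last, NE_last]
  simp

lemma sigE_apply_castSucc {d : ℕ} (v : Euc d) (i : Fin d) :
    sigE v i.castSucc = (2/(‖v‖^2+1)) * v i := by
  show (2/(‖v‖^2+1)) • padE v i.castSucc + ((‖v‖^2-1)/(‖v‖^2+1)) • NE d i.castSucc = _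
  rw [padE_castSucc, NE_castSucc]
  simp

lemma norm_sigE {d : ℕ} (v : Euc d) : ‖sigE v‖ = 1 := by
  have ht : ‖v‖^2 + 1 ≠ 0 := by positivity
  have h : ‖sigE v‖^2 = 1 := by
    rw [sigE, norm_add_sq_real, real_inner_smul_left, real_inner_smul_right, inner_padE_NE,
      norm_smul, norm_smul, mul_pow, mul_pow, norm_padE, norm_NE]
    have h2 : ‖(2/(‖v‖^2+1))‖^2 = (2/(‖v‖^2+1))^2 := by rw [Real.norm_eq_abs, sq_abs]
    have h3 : ‖((‖v‖^2-1)/(‖v‖^2+1))‖^2 = ((‖v‖^2-1)/(‖v‖^2+1))^2 := by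
      rw [Real.norm_eq_abs, sq_abs]
    rw [h2, h3]
    field_simp
    ring
  nlinarith [norm_nonneg (sigE v)]

lemma inner_sigE_NE {d : ℕ} (v : Euc d) : ⟪sigE v, NE d⟫ = (‖v‖^2-1)/(‖v‖^2+1) := by
  rw [inner_NE, sigE_apply_last]

lemma sigE_last_lt_one {d : ℕ} (v : Euc d) : sigE v (Fin.last d) < 1 := by
  rw [sigE_apply_last]
  rw [div_lt_one (by positivity)]
  nlinarith

lemma sigE_ne_NE {d : ℕ} (v : Euc d) : sigE v ≠ NE d := by
  intro h
  have := sigE_last_lt_one v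
  rw [h, NE_last] at this
  exact lt_irrefl _ this

lemma norm_sigE_sub_NE_sq {d : ℕ} (v : Euc d) :
    ‖sigE v - NE d‖^2 = 4/(‖v‖^2+1) := by
  have ht : ‖v‖^2 + 1 ≠ 0 := by positivity
  rw [norm_sub_sq_real, inner_sigE_NE, norm_sigE, norm_NE]
  field_simp
  ring

lemma sigE_injective {d : ℕ} : Function.Injective (sigE (d := d)) := by
  intro v w h
  have ht : ‖v‖^2 + 1 > 0 := by positivity
  have hu : ‖w‖^2 + 1 > 0 := by positivity
  have hlast : (‖v‖^2-1)/(‖v‖^2+1) = (‖w‖^2-1)/(‖w‖^2+1) := by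
    rw [← sigE_apply_last, ← sigE_apply_last, h]
  have hnorm : ‖v‖^2 = ‖w‖^2 := by
    rw [div_eq_div_iff (by positivity) (by positivity)] at hlast
    nlinarith
  ext i
  have this : sigE v i.castSucc = sigE w i.castSucc := by rw [h]
  rw [sigE_apply_castSucc, sigE_apply_castSucc, hnorm] at this
  have h2 : (2/(‖w‖^2+1)) ≠ 0 := by positivity
  exact mul_left_cancel₀ h2 this

lemma sigE_surjective {d : ℕ} (x : Euc (d+1)) (hx : ‖x‖ = 1) (hxN : x ≠ NE d) :
    ∃ v : Euc d, sigE v = x := by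
  set a := x (Fin.last d) with ha
  have hsum : ∑ i : Fin (d+1), (x i)^2 = 1 := by
    rw [← euc_norm_sq, hx]; norm_num
  have hsplit : (∑ i : Fin d, (x i.castSucc)^2) + a^2 = 1 := by
    rw [← hsum, Fin.sum_univ_castSucc]
  have ha1 : a ≤ 1 := by nlinarith [Finset.sum_nonneg (fun i (_ : i ∈ Finset.univ) =>
    sq_nonneg (x (Fin.castSucc i)))]
  have halt : a < 1 := by
    rcases lt_or_eq_of_le ha1 with h|h
    · exact h
    · exfalso
      apply hxN
      have hrest : ∑ i : Fin d, (x i.castSucc)^2 = 0 := by nlinarith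
      have hzero : ∀ i : Fin d, x i.castSucc = 0 := by
        intro i
        have := (Finset.sum_eq_zero_iff_of_nonneg (fun i _ => sq_nonneg (x (Fin.castSucc i)))).1
          hrest i (Finset.mem_univ _)
        exact pow_eq_zero_iff (by norm_num) |>.1 this
      ext i
      refine Fin.lastCases ?_ (fun i => ?_) i
      · show x (Fin.last d) = NE d (Fin.last d)
        rw [NE_last, ← ha, h]
      · show x i.castSucc = NE d i.castSucc
        rw [NE_castSucc, hzero]
  have h1a : 1 - a > 0 := by linarith
  refine ⟨(1/(1-a)) • (WithLp.toLp 2 (fun i : Fin d => x i.castSucc) : Euc d), ?_⟩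
  set v : Euc d := (1/(1-a)) • (WithLp.toLp 2 (fun i : Fin d => x i.castSucc) : Euc d) with hv
  have hvi : ∀ i : Fin d, v i = (1/(1-a)) * x i.castSucc := fun i => rfl
  have hnv : ‖v‖^2 = (1+a)/(1-a) := by
    rw [euc_norm_sq]
    have : ∀ i : Fin d, (v i)^2 = (1/(1-a))^2 * (x i.castSucc)^2 := fun i => by
      rw [hvi]; ring
    rw [Finset.sum_congr rfl (fun i _ => this i), ← Finset.mul_sum,
      show ∑ i : Fin d, (x i.castSucc)^2 = 1 - a^2 by linarith]
    field_simp
    ring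
  have htv : ‖v‖^2 + 1 = 2/(1-a) := by
    rw [hnv]; field_simp; ring
  have h1a' : (1:ℝ) - a ≠ 0 := ne_of_gt h1a
  ext i
  refine Fin.lastCases ?_ (fun i => ?_) i
  · rw [sigE_apply_last, hnv]
    have hpos : (1+a)/(1-a) + 1 > 0 := by rw [← hnv]; positivity
    rw [div_eq_iff (ne_of_gt hpos)]
    field_simp
    ring
  · rw [sigE_apply_castSucc, htv, hvi]
    field_simp


lemma padE_zero {d : ℕ} : padE (0 : Euc d) = 0 := by
  ext i
  show dite _ _ _ = _
  split <;> rfl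

lemma sigE_zero {d : ℕ} : sigE (0 : Euc d) = -(NE d) := by
  rw [sigE, padE_zero, norm_zero]
  norm_num

/-! ### Relation analysis -/

lemma eqvGen_antip {n : ℕ} {s t : Sph n} (h : Relation.EqvGen (antipRel n) s t) :
    t = s ∨ (t : Euc n) = -(s : Euc n) := by
  induction h with
  | rel a b hab => exact Or.inr hab
  | refl a => exact Or.inl rfl
  | symm a b hab ih =>
    rcases ih with h|h
    · exact Or.inl h.symm
    · right; rw [h, neg_neg]
  | trans a b c hab hbc ih1 ih2 =>
    rcases ih1 with h1|h1 <;> rcases ih2 with h2|h2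
    · exact Or.inl (h2.trans h1)
    · right
      rw [h2]
      exact congrArg (fun z : Sph n => -(z : Euc n)) h1
    · right
      rw [h2]
      exact h1
    · left
      apply Subtype.ext
      rw [h2, h1, neg_neg]

lemma opNeg_infty {d : ℕ} : opNeg d ∞ = ∞ := OnePoint.map_infty _

lemma opNeg_coe {d : ℕ} (w : Euc d) : opNeg d (↑w) = ↑(-w) := OnePoint.map_some _ _

lemma opNeg_opNeg {d : ℕ} (v : OnePoint (Euc d)) : opNeg d (opNeg d v) = v := by
  cases v with
  | infty => rw [opNeg_infty, opNeg_infty]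
  | coe w => rw [opNeg_coe, opNeg_coe, neg_neg]

lemma eqvGen_borel {n d : ℕ} {p q : Sph n × OnePoint (Euc d)}
    (h : Relation.EqvGen (borelProdRel n (opNeg d)) p q) :
    p = q ∨ borelProdRel n (opNeg d) p q := by
  induction h with
  | rel a b hab => exact Or.inr hab
  | refl a => exact Or.inl rfl
  | symm a b hab ih =>
    rcases ih with h|h
    · exact Or.inl h.symm
    · right
      refine ⟨?_, ?_⟩
      · rw [h.1, neg_neg]
      · rw [h.2, opNeg_opNeg]
  | trans a b c hab hbc ih1 ih2 =>
    rcases ih1 with h1|h1 <;> rcases ih2 with h2|h2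
    · exact Or.inl (h1.trans h2)
    · right; rw [← h1] at h2; exact h2
    · right; rw [h2] at h1; exact h1
    · left
      have e1 : (c.1 : Euc n) = (a.1 : Euc n) := by rw [h2.1, h1.1, neg_neg]
      have e2 : c.2 = a.2 := by rw [h2.2, h1.2, opNeg_opNeg]
      exact Prod.ext (Subtype.ext e1.symm) e2.symm

/-! ### `RealProj` is Hausdorff -/

noncomputable def projGram {n : ℕ} : RealProj n → (Fin n → Fin n → ℝ) :=
  Quot.lift (fun s : Sph n => fun i k => (s : Euc n) i * (s : Euc n) k) (by
    intro s t hst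
    funext i k
    show (s : Euc n) i * (s : Euc n) k = (t : Euc n) i * (t : Euc n) k
    have hts : (t : Euc n) = -(s : Euc n) := hst
    rw [hts, PiLp.neg_apply, PiLp.neg_apply]
    ring)

lemma euc_coord_continuous {n : ℕ} (i : Fin n) : Continuous (fun x : Euc n => x i) :=
  (continuous_apply i).comp (EuclideanSpace.equiv (Fin n) ℝ).continuous

lemma projGram_continuous {n : ℕ} : Continuous (projGram (n := n)) := by
  apply continuous_quot_lift
  refine continuous_pi (fun i => continuous_pi (fun k => ?_))
  exact ((euc_coord_continuous i).comp continuous_subtype_val).mul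
    ((euc_coord_continuous k).comp continuous_subtype_val)

lemma sph_exists_ne_zero {n : ℕ} (s : Sph n) : ∃ i, (s : Euc n) i ≠ 0 := by
  by_contra h
  push_neg at h
  have h0 : (s : Euc n) = 0 := by ext i; exact h i
  have := mem_sphere_zero_iff_norm.1 s.2
  rw [h0, norm_zero] at this
  norm_num at this

lemma projGram_injective {n : ℕ} : Function.Injective (projGram (n := n)) := by
  intro a b
  induction a using Quot.ind with | _ s => ?_
  induction b using Quot.ind with | _ t => ?_
  intro h
  have hG : ∀ i k, (s : Euc n) i * (s : Euc n) k = (t : Euc n) i * (t : Euc n) k :=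
    fun i k => congrFun (congrFun h i) k
  obtain ⟨i₀, hi₀⟩ := sph_exists_ne_zero s
  have hsq : (s : Euc n) i₀ * (s : Euc n) i₀ = (t : Euc n) i₀ * (t : Euc n) i₀ := hG i₀ i₀
  rcases mul_self_eq_mul_self_iff.1 hsq with hc|hc
  · have : (s : Euc n) = (t : Euc n) := by
      ext k
      have := hG i₀ k
      rw [← hc] at this
      exact mul_left_cancel₀ hi₀ this
    exact congrArg _ (Subtype.ext this)
  · apply Quot.sound
    show (t : Euc n) = -(s : Euc n)
    ext k
    have hGk := hG i₀ k
    have ht₀ : (t : Euc n) i₀ ≠ 0 := by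
      intro hz
      rw [hz, neg_zero] at hc
      exact hi₀ hc
    have h4 : (t : Euc n) i₀ * ((t : Euc n) k + (s : Euc n) k) = 0 := by
      rw [hc] at hGk
      nlinarith [hGk]
    rcases mul_eq_zero.1 h4 with h|h
    · exact absurd h ht₀
    · rw [PiLp.neg_apply]
      linarith

instance realProj_t2 (n : ℕ) : T2Space (RealProj n) := by
  constructor
  intro a b hab
  exact separated_by_continuous projGram_continuous (fun h => hab (projGram_injective h))

/-! ### The map -/

section MainConstruction

variable {m d : ℕ} (c : CliffFam ℝ m (Fin d))

lemma cMat_neg (x : Euc (m+1)) : cMat c (-x : Euc (m+1)) = -(cMat c x) := by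
  rw [cMat, cMat]
  have h0 : (-x : Euc (m+1)) 0 = -(x 0) := rfl
  have hs : ∀ i : Fin m, (-x : Euc (m+1)) i.succ = -(x i.succ) := fun i => rfl
  rw [h0]
  simp only [hs, neg_smul]
  rw [Finset.sum_neg_distrib, ← neg_add]

lemma cMat_unit_mul {s : Sph (m+1)} : (cMat c (s : Euc (m+1)))ᵀ * cMat c (s : Euc (m+1)) = 1 := by
  rw [cMat_transpose_mul, mem_sphere_zero_iff_norm.1 s.2]
  norm_num

lemma cMat_mul_unit {s : Sph (m+1)} : cMat c (s : Euc (m+1)) * (cMat c (s : Euc (m+1)))ᵀ = 1 :=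
  mul_eq_one_comm.1 (cMat_unit_mul c)

lemma act_unit_left_inv {s : Sph (m+1)} (v : Euc d) :
    act (cMat c (s : Euc (m+1)))ᵀ (act (cMat c (s : Euc (m+1))) v) = v := by
  rw [act_act, cMat_unit_mul, act_one]

lemma act_unit_right_inv {s : Sph (m+1)} (v : Euc d) :
    act (cMat c (s : Euc (m+1))) (act (cMat c (s : Euc (m+1)))ᵀ v) = v := by
  rw [act_act, cMat_mul_unit, act_one]

lemma act_unit_inj {s : Sph (m+1)} {v w : Euc d}
    (h : act (cMat c (s : Euc (m+1))) v = act (cMat c (s : Euc (m+1))) w) : v = w := by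
  rw [← act_unit_left_inv c (s := s) v, ← act_unit_left_inv c (s := s) w, h]

lemma norm_act_unit {s : Sph (m+1)} (v : Euc d) :
    ‖act (cMat c (s : Euc (m+1))) v‖ = ‖v‖ := by
  have h := norm_act (cMat_transpose_mul c (s : Euc (m+1))) v
  rw [mem_sphere_zero_iff_norm.1 s.2] at h
  norm_num at h
  rw [← Real.sqrt_sq (norm_nonneg (act _ v)), h, Real.sqrt_sq (norm_nonneg v)]

/-- underlying map to `Euc (d+1)` -/
noncomputable def HFval (s : Sph (m+1)) (v : OnePoint (Euc d)) : Euc (d+1) :=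
  OnePoint.elim v (NE d) (fun w => sigE (act (cMat c (s : Euc (m+1))) w))

lemma HFval_infty (s : Sph (m+1)) : HFval c s ∞ = NE d := rfl

lemma HFval_coe (s : Sph (m+1)) (w : Euc d) :
    HFval c s ↑w = sigE (act (cMat c (s : Euc (m+1))) w) := rfl

lemma norm_HFval (s : Sph (m+1)) (v : OnePoint (Euc d)) : ‖HFval c s v‖ = 1 := by
  cases v with
  | infty => rw [HFval_infty]; exact norm_NE
  | coe w => rw [HFval_coe]; exact norm_sigE _

noncomputable def FF (p : Sph (m+1) × OnePoint (Euc d)) : RealProj (m+1) × Sph (d+1) :=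
  (projMk p.1, ⟨HFval c p.1 p.2, mem_sphere_zero_iff_norm.2 (norm_HFval c p.1 p.2)⟩)

lemma FF_compat : ∀ p q, borelProdRel (m+1) (opNeg d) p q → FF c p = FF c q := by
  rintro ⟨s, v⟩ ⟨t, w⟩ ⟨h1, h2⟩
  have hM : cMat c (t : Euc (m+1)) = -(cMat c (s : Euc (m+1))) := by rw [h1, cMat_neg]
  refine Prod.ext (Quot.sound h1) (Subtype.ext ?_)
  show HFval c s v = HFval c t w
  cases v with
  | infty =>
    have h2' : w = opNeg d ∞ := h2
    rw [h2', opNeg_infty, HFval_infty, HFval_infty]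
  | coe u =>
    have h2' : w = opNeg d ↑u := h2
    rw [h2', opNeg_coe, HFval_coe, HFval_coe, hM, act_negv, act_neg, neg_neg]

/-! continuity -/

lemma continuous_actF : Continuous (fun q : Euc (m+1) × Euc d => act (cMat c q.1) q.2) := by
  have hrepr : (fun q : Euc (m+1) × Euc d => act (cMat c q.1) q.2)
      = (EuclideanSpace.equiv (Fin d) ℝ).symm ∘
        (fun q : Euc (m+1) × Euc d => fun k => ∑ l, cMat c q.1 k l * q.2 l) := rfl
  rw [hrepr]
  refine (EuclideanSpace.equiv (Fin d) ℝ).symm.continuous.comp ?_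
  refine continuous_pi (fun k => ?_)
  refine continuous_finset_sum _ (fun l _ => ?_)
  have hentry : Continuous (fun q : Euc (m+1) × Euc d => cMat c q.1 k l) := by
    have : (fun q : Euc (m+1) × Euc d => cMat c q.1 k l)
        = fun q : Euc (m+1) × Euc d =>
          q.1 0 * (1 : Matrix (Fin d) (Fin d) ℝ) k l + ∑ i : Fin m, q.1 i.succ * c.E i k l := by
      funext q
      rw [cMat]
      simp [Matrix.add_apply, Matrix.smul_apply, Matrix.sum_apply, smul_eq_mul]
    rw [this]
    refine Continuous.add ?_ ?_
    · exact ((euc_coord_continuous 0).comp continuous_fst).mul continuous_const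
    · exact continuous_finset_sum _ (fun i _ =>
        ((euc_coord_continuous i.succ).comp continuous_fst).mul continuous_const)
  exact hentry.mul ((euc_coord_continuous l).comp continuous_snd)

lemma continuous_sigE {d' : ℕ} : Continuous (sigE (d := d')) := by
  have hn : Continuous (fun v : Euc d' => ‖v‖^2) := (continuous_norm).pow 2
  have hden : ∀ v : Euc d', ‖v‖^2 + 1 ≠ 0 := fun v => by positivity
  refine Continuous.add ?_ ?_
  · refine Continuous.smul ((continuous_const.div (hn.add continuous_const) (fun v => hden v))) ?_
    have : (padE (d := d')) = (EuclideanSpace.equiv (Fin (d'+1)) ℝ).symm ∘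
        (fun v : Euc d' => fun i : Fin (d'+1) => if h : (i : ℕ) < d' then v ⟨i, h⟩ else 0) := rfl
    rw [this]
    refine (EuclideanSpace.equiv _ ℝ).symm.continuous.comp (continuous_pi (fun i => ?_))
    by_cases h : (i : ℕ) < d'
    · simp only [dif_pos h]
      exact euc_coord_continuous _
    · simp only [dif_neg h]
      exact continuous_const
  · exact Continuous.smul (((hn.sub continuous_const).div (hn.add continuous_const)
      (fun v => hden v))) continuous_const

lemma continuous_HFval : Continuous (fun p : Sph (m+1) × OnePoint (Euc d) => HFval c p.1 p.2) := by
  have hfin : Continuous (fun q : Sph (m+1) × Euc d =>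
      sigE (act (cMat c (q.1 : Euc (m+1))) q.2)) := by
    exact continuous_sigE.comp ((continuous_actF c).comp
      ((continuous_subtype_val.comp continuous_fst).prodMk continuous_snd))
  rw [continuous_iff_continuousAt]
  rintro ⟨s₀, v₀⟩
  cases v₀ with
  | coe w₀ =>
    rw [ContinuousAt, nhds_prod_eq, OnePoint.nhds_coe_eq, ← Filter.map_id (f := nhds s₀),
      Filter.prod_map_map_eq', Filter.tendsto_map'_iff, ← nhds_prod_eq]
    exact hfin.tendsto (s₀, w₀)
  | infty =>
    rw [ContinuousAt, Metric.tendsto_nhds]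
    intro ε hε
    set R : ℝ := 2/ε with hR
    have hmem : (Set.univ ×ˢ ({∞} ∪ (fun w : Euc d => (↑w : OnePoint (Euc d))) ''
        {w : Euc d | R < ‖w‖})) ∈ nhds ((s₀, ∞) : Sph (m+1) × OnePoint (Euc d)) := by
      refine prod_mem_nhds Filter.univ_mem ?_
      refine IsOpen.mem_nhds ?_ (Or.inl rfl)
      rw [OnePoint.isOpen_iff_of_mem (Or.inl rfl)]
      have hpre : (OnePoint.some ⁻¹' ({∞} ∪ (fun w : Euc d => (↑w : OnePoint (Euc d))) ''
          {w : Euc d | R < ‖w‖}))ᶜ = Metric.closedBall (0 : Euc d) R := by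
        ext w
        simp only [Set.mem_compl_iff, Set.mem_preimage, Set.mem_union, Set.mem_singleton_iff,
          Set.mem_image, Set.mem_setOf_eq, mem_closedBall_zero_iff]
        constructor
        · intro h
          push_neg at h
          by_contra hlt
          exact h.2 w (by linarith) rfl
        · intro h
          push_neg
          refine ⟨fun hh => by exact OnePoint.coe_ne_infty w hh, ?_⟩
          rintro u hu huw
          have : u = w := by
            have := Option.some.inj huw
            exact this
          rw [this] at hu
          linarith
      rw [hpre]
      exact ⟨Metric.isClosed_closedBall, isCompact_closedBall _ _⟩
    refine Filter.eventually_of_mem hmem ?_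
    rintro ⟨s, v⟩ ⟨-, hv⟩
    dsimp only at hv
    show dist (HFval c s v) (HFval c s₀ ∞) < ε
    rcases hv with hv | ⟨w, hw, rfl⟩
    · rw [Set.mem_singleton_iff] at hv
      rw [hv, HFval_infty, HFval_infty, dist_self]
      exact hε
    · rw [HFval_infty, HFval_coe, dist_eq_norm]
      set u := act (cMat c (s : Euc (m+1))) w with hu
      have hnu : ‖u‖ = ‖w‖ := norm_act_unit c w
      have hsq : ‖sigE u - NE d‖^2 = 4/(‖u‖^2+1) := norm_sigE_sub_NE_sq u
      have hRw : R < ‖w‖ := hw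
      have hR0 : 0 ≤ R := by positivity
      have hw0 : 0 < ‖w‖ := lt_of_le_of_lt hR0 hRw
      have hlt : ‖sigE u - NE d‖^2 < ε^2 := by
        rw [hsq, hnu]
        have h1 : 4/(‖w‖^2+1) < 4/(R^2+1) ∨ R = 0 := by
          rcases eq_or_lt_of_le hR0 with h|h
          · exact Or.inr h.symm
          · left
            apply div_lt_div_of_pos_left (by norm_num) (by positivity)
            nlinarith
        rcases h1 with h1|h1
        · have h2 : 4/(R^2+1) ≤ ε^2 := by
            rw [hR]
            rw [div_le_iff₀ (by positivity)]
            have : ε^2 * ((2/ε)^2 + 1) = 4 + ε^2 := by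
              field_simp
              ring
            rw [this]
            nlinarith
          linarith
        · exfalso
          rw [hR] at h1
          have h2 : (0:ℝ) < 2/ε := by positivity
          rw [h1] at h2
          exact lt_irrefl _ h2
      nlinarith [norm_nonneg (sigE u - NE d)]

lemma continuous_FF : Continuous (FF c) := by
  refine Continuous.prodMk ?_ ?_
  · exact continuous_quot_mk.comp continuous_fst
  · exact Continuous.subtype_mk (continuous_HFval c) _

/-! bijectivity -/

lemma HFval_coe_ne_infty (s : Sph (m+1)) (w : Euc d) : HFval c s ↑w ≠ NE d := by
  rw [HFval_coe]
  exact sigE_ne_NE _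

lemma FF_lift_inj : ∀ p q : Sph (m+1) × OnePoint (Euc d), FF c p = FF c q →
    Quot.mk (borelProdRel (m+1) (opNeg d)) p = Quot.mk (borelProdRel (m+1) (opNeg d)) q := by
  rintro ⟨s, v⟩ ⟨t, w⟩ h
  have h1 : projMk s = projMk t := congrArg Prod.fst h
  have h2 : HFval c s v = HFval c t w := congrArg Subtype.val (congrArg Prod.snd h)
  rcases eqvGen_antip (Quot.eq.1 h1) with hc|hc
  · subst hc
    have hvw : v = w := by
      cases v with
      | infty =>
        cases w with
        | infty => rfl
        | coe w' =>
          exfalso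
          exact HFval_coe_ne_infty c t w' h2.symm
      | coe v' =>
        cases w with
        | infty =>
          exfalso
          exact HFval_coe_ne_infty c t v' h2
        | coe w' =>
          rw [HFval_coe, HFval_coe] at h2
          have := act_unit_inj c (sigE_injective h2)
          rw [this]
    rw [hvw]
  · have hM : cMat c (t : Euc (m+1)) = -(cMat c (s : Euc (m+1))) := by rw [hc, cMat_neg]
    apply Quot.sound
    refine ⟨hc, ?_⟩
    cases v with
    | infty =>
      cases w with
      | infty => exact opNeg_infty.symm
      | coe w' =>
        exfalso
        exact HFval_coe_ne_infty c t w' h2.symm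
    | coe v' =>
      cases w with
      | infty =>
        exfalso
        exact HFval_coe_ne_infty c s v' h2
      | coe w' =>
        rw [HFval_coe, HFval_coe, hM, act_neg] at h2
        have h4 : act (cMat c (s : Euc (m+1))) v' = act (cMat c (s : Euc (m+1))) (-w') := by
          rw [act_negv]
          exact sigE_injective h2
        have h5 : v' = -w' := act_unit_inj c h4
        rw [opNeg_coe]
        have h6 : w' = -v' := by rw [h5, neg_neg]
        rw [h6]

lemma FF_surj : Function.Surjective (FF c) := by
  rintro ⟨r, x⟩
  obtain ⟨s, rfl⟩ := Quot.exists_rep r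
  rcases eq_or_ne (x : Euc (d+1)) (NE d) with hx|hx
  · refine ⟨(s, ∞), Prod.ext rfl (Subtype.ext ?_)⟩
    show HFval c s ∞ = (x : Euc (d+1))
    rw [HFval_infty, hx]
  · obtain ⟨u, hu⟩ := sigE_surjective (x : Euc (d+1)) (mem_sphere_zero_iff_norm.1 x.2) hx
    refine ⟨(s, ↑(act (cMat c (s : Euc (m+1)))ᵀ u)), Prod.ext rfl (Subtype.ext ?_)⟩
    show HFval c s (↑(act (cMat c (s : Euc (m+1)))ᵀ u)) = (x : Euc (d+1))
    rw [HFval_coe, act_unit_right_inv, hu]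

end MainConstruction

/-- For `ℓ ≥ 2` and `j = 2^{φ(ℓ−1)}`, there is a homeomorphism
`Φ : S(ℓα) ×_{ℤ/2} S^{jα} → ℝP^{ℓ−1} × S^j` over `ℝP^{ℓ−1}` (commuting with the projections
to `ℝP^{ℓ−1}`, the projection of the source being induced by `(s, v) ↦ [s]`) which preserves
the distinguished sections: there are two antipodal points `n, s ∈ S^j` such that `Φ` carries
the class of `(s, 0)` to `([s], n)` and the class of `(s, ∞)` to `([s], s)`. -/
theorem borelProd_onePoint_homeo_trivial (ℓ : ℕ) (hℓ : 2 ≤ ℓ) (j : ℕ)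
    (hj : j = 2 ^ adamsPhi (ℓ - 1)) :
    ∃ Φ : BorelProd ℓ (opNeg j) ≃ₜ RealProj ℓ × Sph (j + 1),
      (∀ (s : Sph ℓ) (v : OnePoint (Euc j)),
        (Φ (Quot.mk _ (s, v))).1 = projMk s) ∧
      ∃ nPt sPt : Sph (j + 1), (sPt : Euc (j + 1)) = -(nPt : Euc (j + 1)) ∧
        (∀ s : Sph ℓ,
          Φ (Quot.mk _ (s, ((0 : Euc j) : OnePoint (Euc j)))) = (projMk s, nPt)) ∧
        (∀ s : Sph ℓ,
          Φ (Quot.mk _ (s, (∞ : OnePoint (Euc j)))) = (projMk s, sPt)) := by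
  obtain ⟨m, rfl⟩ : ∃ m, ℓ = m + 1 := ⟨ℓ - 1, by omega⟩
  have hm1 : 1 ≤ m := by omega
  have hj' : j = 2 ^ adamsPhi m := by simpa using hj
  set c : CliffFam ℝ m (Fin j) := finalFam m j hm1 hj' with hc
  have hcont : Continuous (Quot.lift (FF c) (FF_compat c)) :=
    continuous_quot_lift _ (continuous_FF c)
  have hbij : Function.Bijective (Quot.lift (FF c) (FF_compat c)) := by
    constructor
    · intro a b
      induction a using Quot.ind with | _ p => ?_
      induction b using Quot.ind with | _ q => ?_
      intro h
      exact FF_lift_inj c p q h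
    · intro y
      obtain ⟨p, hp⟩ := FF_surj c y
      exact ⟨Quot.mk _ p, hp⟩
  refine ⟨Continuous.homeoOfEquivCompactToT2 (f := Equiv.ofBijective _ hbij) hcont,
    fun s v => ?_,
    ⟨-(NE j), by rw [mem_sphere_zero_iff_norm, norm_neg]; exact norm_NE⟩,
    ⟨NE j, by rw [mem_sphere_zero_iff_norm]; exact norm_NE⟩,
    (neg_neg _).symm, fun s => ?_, fun s => ?_⟩
  · show (FF c (s, v)).1 = projMk s
    rfl
  · refine Prod.ext ?_ (Subtype.ext ?_)
    · show (FF c (s, ((0 : Euc j) : OnePoint (Euc j)))).1 = projMk s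
      rfl
    · have hred : (Continuous.homeoOfEquivCompactToT2 (f := Equiv.ofBijective _ hbij) hcont)
          (Quot.mk (borelProdRel (m+1) (opNeg j)) (s, ((0 : Euc j) : OnePoint (Euc j))))
          = FF c (s, ((0 : Euc j) : OnePoint (Euc j))) := rfl
      rw [hred]
      show HFval c s (↑(0 : Euc j)) = -(NE j)
      rw [HFval_coe, act_zero, sigE_zero]
  · refine Prod.ext ?_ (Subtype.ext ?_)
    · show (FF c (s, (∞ : OnePoint (Euc j)))).1 = projMk s
      rfl
    · have hred : (Continuous.homeoOfEquivCompactToT2 (f := Equiv.ofBijective _ hbij) hcont)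
          (Quot.mk (borelProdRel (m+1) (opNeg j)) (s, (∞ : OnePoint (Euc j))))
          = FF c (s, (∞ : OnePoint (Euc j))) := rfl
      rw [hred]
      show HFval c s ∞ = NE j
      rfl
end
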